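/- Every quadtree (balanced or not) can be properly colored with 4 colors under edge adjacency; that is, for every quadtree Q there exists a function f : Q → Fin 4 such that f(s) ≠ f(t) whenever s and t are edge-adjacent squares of Q. -/

import Mathlib

/-- A dyadic square `[i/2^k, (i+1)/2^k] × [j/2^k, (j+1)/2^k] ⊆ [0,1]²`,
recorded by its level `k` and coordinates `i, j < 2^k`. -/
structure DyadicSquare where
  k : ℕ
  i : ℕ
  j : ℕ
  hi : i < 2 ^ k
  hj : j < 2 ^ k
deriving DecidableEq

namespace DyadicSquare

/-- The subset of the plane occupied by a dyadic square. -/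
def region (s : DyadicSquare) : Set (ℝ × ℝ) :=
  Set.Icc ((s.i : ℝ) / 2 ^ s.k) (((s.i : ℝ) + 1) / 2 ^ s.k) ×ˢ
    Set.Icc ((s.j : ℝ) / 2 ^ s.k) (((s.j : ℝ) + 1) / 2 ^ s.k)

/-- Two squares are edge-adjacent if they are distinct and their intersection
contains more than one point (a segment of positive length). -/
def EdgeAdj (s t : DyadicSquare) : Prop :=
  s ≠ t ∧ (s.region ∩ t.region).Nontrivial

/-- Two squares are corner-adjacent if they are distinct and their intersection
is nonempty (they share at least a corner point or part of an edge). -/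
def CornerAdj (s t : DyadicSquare) : Prop :=
  s ≠ t ∧ (s.region ∩ t.region).Nonempty

end DyadicSquare

/-- A finite set of dyadic squares has pairwise disjoint interiors. -/
def PairwiseDisjointInteriors (Q : Finset DyadicSquare) : Prop :=
  (Q : Set DyadicSquare).Pairwise fun s t =>
    interior s.region ∩ interior t.region = ∅

/-- A quadtree: a finite set of dyadic squares with pairwise disjoint interiors
whose union is the unit square `[0,1]²`. -/
def IsQuadtree (Q : Finset DyadicSquare) : Prop :=
  PairwiseDisjointInteriors Q ∧
    (⋃ s ∈ Q, s.region) = Set.Icc (0 : ℝ) 1 ×ˢ Set.Icc (0 : ℝ) 1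

/-- A quadtree is balanced if any two edge-adjacent squares have side lengths
(`2^{-k}`) within a factor of two of each other. -/
def IsBalanced (Q : Finset DyadicSquare) : Prop :=
  ∀ s ∈ Q, ∀ t ∈ Q, DyadicSquare.EdgeAdj s t → s.k ≤ t.k + 1 ∧ t.k ≤ s.k + 1


namespace QT4
open DyadicSquare Set

noncomputable def lo (a k : ℕ) : ℝ := (a : ℝ) / 2 ^ k

lemma two_pow_pos' (k : ℕ) : (0:ℝ) < 2 ^ k := by positivity

lemma lo_le_lo {a b k : ℕ} : lo a k ≤ lo b k ↔ a ≤ b := by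
  unfold lo
  rw [div_le_div_iff₀ (two_pow_pos' k) (two_pow_pos' k),
    mul_le_mul_iff_of_pos_right (two_pow_pos' k)]
  exact Nat.cast_le

lemma lo_lt_lo {a b k : ℕ} : lo a k < lo b k ↔ a < b := by
  unfold lo
  rw [div_lt_div_iff₀ (two_pow_pos' k) (two_pow_pos' k),
    mul_lt_mul_iff_of_pos_right (two_pow_pos' k)]
  exact Nat.cast_lt

lemma lo_inj {a b k : ℕ} : lo a k = lo b k ↔ a = b := by
  constructor
  · intro h
    exact le_antisymm (lo_le_lo.1 h.le) (lo_le_lo.1 h.ge)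
  · rintro rfl; rfl

lemma lo_shift (a k d : ℕ) : lo a k = lo (a * 2 ^ d) (k + d) := by
  unfold lo
  rw [pow_add]
  push_cast
  field_simp

lemma lo_succ_lt (a k : ℕ) : lo a k < lo (a+1) k := lo_lt_lo.2 (Nat.lt_succ_self a)

lemma region_eq (s : DyadicSquare) :
    s.region = Icc (lo s.i s.k) (lo (s.i+1) s.k) ×ˢ Icc (lo s.j s.k) (lo (s.j+1) s.k) := by
  unfold DyadicSquare.region lo
  push_cast
  rfl

lemma interior_region (s : DyadicSquare) :
    interior s.region = Ioo (lo s.i s.k) (lo (s.i+1) s.k) ×ˢ Ioo (lo s.j s.k) (lo (s.j+1) s.k) := by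
  rw [region_eq, interior_prod_eq, interior_Icc, interior_Icc]

lemma mem_region {s : DyadicSquare} {p : ℝ × ℝ} :
    p ∈ s.region ↔ (lo s.i s.k ≤ p.1 ∧ p.1 ≤ lo (s.i+1) s.k) ∧
      (lo s.j s.k ≤ p.2 ∧ p.2 ≤ lo (s.j+1) s.k) := by
  rw [region_eq]; simp only [Set.mem_prod, Set.mem_Icc]

lemma mem_interior_region {s : DyadicSquare} {p : ℝ × ℝ} :
    p ∈ interior s.region ↔ (lo s.i s.k < p.1 ∧ p.1 < lo (s.i+1) s.k) ∧
      (lo s.j s.k < p.2 ∧ p.2 < lo (s.j+1) s.k) := by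
  rw [interior_region]; simp only [Set.mem_prod, Set.mem_Ioo]

/-- 1-D dyadic nesting: if `a / 2^d = b` then the level-`(m+d)` interval of `a`
is contained in the level-`m` interval of `b`. -/
lemma I_nest {m d a b : ℕ} (h : a / 2 ^ d = b) :
    Icc (lo a (m+d)) (lo (a+1) (m+d)) ⊆ Icc (lo b m) (lo (b+1) m) := by
  apply Icc_subset_Icc
  · rw [lo_shift b m d]
    exact lo_le_lo.2 (by rw [← h]; exact Nat.div_mul_le_self a (2^d))
  · rw [lo_shift (b+1) m d]
    apply lo_le_lo.2
    have h2 : 0 < 2 ^ d := Nat.pow_pos (by norm_num)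
    have := Nat.div_add_mod a (2^d)
    have hm : a % 2^d < 2^d := Nat.mod_lt _ h2
    calc a + 1 = 2^d * (a / 2^d) + a % 2^d + 1 := by rw [this]
    _ ≤ 2^d * (a / 2^d) + 2^d := by omega
    _ = (a/2^d + 1) * 2^d := by ring
    _ = (b+1) * 2^d := by rw [h]

lemma I_overlap_nest {m d a b : ℕ} (h1 : lo a (m+d) < lo (b+1) m)
    (h2 : lo b m < lo (a+1) (m+d)) : a / 2 ^ d = b := by
  rw [lo_shift (b+1) m d] at h1
  rw [lo_shift b m d] at h2
  have h1' : a < (b+1) * 2^d := lo_lt_lo.1 h1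
  have h2' : b * 2^d < a + 1 := lo_lt_lo.1 h2
  exact Nat.div_eq_of_lt_le (by omega) (by simpa [Nat.succ_mul] using h1')

lemma exists_between4 {a b c d : ℝ} (h1 : a < c) (h2 : a < d) (h3 : b < c) (h4 : b < d) :
    ∃ x, a < x ∧ b < x ∧ x < c ∧ x < d := by
  have hm : max a b < min c d := max_lt (lt_min h1 h2) (lt_min h3 h4)
  obtain ⟨x, hx1, hx2⟩ := exists_between hm
  exact ⟨x, lt_of_le_of_lt (le_max_left a b) hx1, lt_of_le_of_lt (le_max_right a b) hx1,
    lt_of_lt_of_le hx2 (min_le_left c d), lt_of_lt_of_le hx2 (min_le_right c d)⟩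

/-- If the x-intervals and y-intervals both strictly overlap, the interiors meet. -/
lemma interiors_meet {s t : DyadicSquare}
    (hx1 : lo s.i s.k < lo (t.i+1) t.k) (hx2 : lo t.i t.k < lo (s.i+1) s.k)
    (hy1 : lo s.j s.k < lo (t.j+1) t.k) (hy2 : lo t.j t.k < lo (s.j+1) s.k) :
    (interior s.region ∩ interior t.region).Nonempty := by
  obtain ⟨x, hxa, hxb, hxc, hxd⟩ := exists_between4 (lo_succ_lt s.i s.k) hx1 hx2 (lo_succ_lt t.i t.k)
  obtain ⟨y, hya, hyb, hyc, hyd⟩ := exists_between4 (lo_succ_lt s.j s.k) hy1 hy2 (lo_succ_lt t.j t.k)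
  refine ⟨(x, y), ?_, ?_⟩ <;> rw [mem_interior_region]
  · exact ⟨⟨hxa, hxc⟩, ⟨hya, hyc⟩⟩
  · exact ⟨⟨hxb, hxd⟩, ⟨hyb, hyd⟩⟩

lemma region_subset_of_nest {s t : DyadicSquare} (hk : t.k ≤ s.k)
    (hi : s.i / 2 ^ (s.k - t.k) = t.i) (hj : s.j / 2 ^ (s.k - t.k) = t.j) :
    s.region ⊆ t.region := by
  rw [region_eq, region_eq]
  have hsk : s.k = t.k + (s.k - t.k) := by omega
  apply Set.prod_mono
  · rw [hsk]; exact I_nest hi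
  · rw [hsk]; exact I_nest hj

lemma interior_nonempty (s : DyadicSquare) : (interior s.region).Nonempty := by
  obtain ⟨x, hx1, hx2⟩ := exists_between (lo_succ_lt s.i s.k)
  obtain ⟨y, hy1, hy2⟩ := exists_between (lo_succ_lt s.j s.k)
  exact ⟨(x, y), mem_interior_region.2 ⟨⟨hx1, hx2⟩, ⟨hy1, hy2⟩⟩⟩

lemma meet_interior {s : DyadicSquare} {U : Set (ℝ × ℝ)} (hU : IsOpen U)
    (h : (s.region ∩ U).Nonempty) : (interior s.region ∩ U).Nonempty := by
  obtain ⟨p, hp, hpU⟩ := h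
  have hcl : s.region = closure (interior s.region) := by
    rw [interior_region, region_eq, closure_prod_eq,
      closure_Ioo (ne_of_lt (lo_succ_lt s.i s.k)), closure_Ioo (ne_of_lt (lo_succ_lt s.j s.k))]
  rw [hcl] at hp
  obtain ⟨q, hqU, hq⟩ := mem_closure_iff.1 hp U hU hpU
  exact ⟨q, hq, hqU⟩

lemma not_open_overlap {s t : DyadicSquare}
    (hdis : interior s.region ∩ interior t.region = ∅) :
    ¬((lo s.i s.k < lo (t.i+1) t.k ∧ lo t.i t.k < lo (s.i+1) s.k) ∧
      (lo s.j s.k < lo (t.j+1) t.k ∧ lo t.j t.k < lo (s.j+1) s.k)) := by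
  rintro ⟨⟨hx1, hx2⟩, ⟨hy1, hy2⟩⟩
  have h := interiors_meet hx1 hx2 hy1 hy2
  rw [hdis] at h
  exact Set.not_nonempty_empty h

lemma abut_1d {m K a b : ℕ}
    (hd : ¬(lo a m < lo (b+1) K ∧ lo b K < lo (a+1) m)) (x : ℝ)
    (hx1 : lo a m ≤ x) (hx2 : x ≤ lo (a+1) m) (hx3 : lo b K ≤ x) (hx4 : x ≤ lo (b+1) K) :
    lo (a+1) m = lo b K ∨ lo (b+1) K = lo a m := by
  push_neg at hd
  rcases le_or_gt (lo (b+1) K) (lo a m) with h | h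
  · exact Or.inr (le_antisymm h (hx1.trans hx4))
  · exact Or.inl (le_antisymm (hd h) (hx3.trans hx2))

lemma adj_char {s t : DyadicSquare} (hk : s.k ≤ t.k)
    (hdis : interior s.region ∩ interior t.region = ∅)
    (hnt : (s.region ∩ t.region).Nontrivial) :
    (((s.i+1) * 2 ^ (t.k - s.k) = t.i ∨ t.i + 1 = s.i * 2 ^ (t.k - s.k)) ∧
        t.j / 2 ^ (t.k - s.k) = s.j) ∨
      (((s.j+1) * 2 ^ (t.k - s.k) = t.j ∨ t.j + 1 = s.j * 2 ^ (t.k - s.k)) ∧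
        t.i / 2 ^ (t.k - s.k) = s.i) := by
  set d := t.k - s.k with hd
  have htk : t.k = s.k + d := by omega
  obtain ⟨p, hp, q, hq, hpq⟩ := hnt
  obtain ⟨hps, hpt⟩ := hp
  obtain ⟨hqs, hqt⟩ := hq
  rw [mem_region] at hps hpt hqs hqt
  have hne : p.1 ≠ q.1 ∨ p.2 ≠ q.2 := by
    by_contra h
    push_neg at h
    exact hpq (Prod.ext h.1 h.2)
  rcases hne with hne | hne
  · -- x-coordinates differ: open x-overlap, y abuts
    right
    have hxo : lo s.i s.k < lo (t.i+1) t.k ∧ lo t.i t.k < lo (s.i+1) s.k := by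
      rcases hne.lt_or_gt with h | h
      · exact ⟨lt_of_le_of_lt hps.1.1 (lt_of_lt_of_le h hqt.1.2),
          lt_of_le_of_lt hpt.1.1 (lt_of_lt_of_le h hqs.1.2)⟩
      · exact ⟨lt_of_le_of_lt hqs.1.1 (lt_of_lt_of_le h hpt.1.2),
          lt_of_le_of_lt hqt.1.1 (lt_of_lt_of_le h hps.1.2)⟩
    have hyno : ¬(lo s.j s.k < lo (t.j+1) t.k ∧ lo t.j t.k < lo (s.j+1) s.k) :=
      fun hyo => not_open_overlap hdis ⟨hxo, hyo⟩
    have habut := abut_1d hyno p.2 hps.2.1 hps.2.2 hpt.2.1 hpt.2.2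
    constructor
    · rcases habut with h | h
      · left
        rw [lo_shift (s.j+1) s.k d, ← htk] at h
        exact lo_inj.1 h
      · right
        rw [lo_shift s.j s.k d, ← htk] at h
        exact lo_inj.1 h
    · refine I_overlap_nest (m := s.k) (d := d) ?_ ?_
      · rw [← htk]; exact hxo.2
      · rw [← htk]; exact hxo.1
  · -- y-coordinates differ: open y-overlap, x abuts
    left
    have hyo : lo s.j s.k < lo (t.j+1) t.k ∧ lo t.j t.k < lo (s.j+1) s.k := by
      rcases hne.lt_or_gt with h | h
      · exact ⟨lt_of_le_of_lt hps.2.1 (lt_of_lt_of_le h hqt.2.2),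
          lt_of_le_of_lt hpt.2.1 (lt_of_lt_of_le h hqs.2.2)⟩
      · exact ⟨lt_of_le_of_lt hqs.2.1 (lt_of_lt_of_le h hpt.2.2),
          lt_of_le_of_lt hqt.2.1 (lt_of_lt_of_le h hps.2.2)⟩
    have hxno : ¬(lo s.i s.k < lo (t.i+1) t.k ∧ lo t.i t.k < lo (s.i+1) s.k) :=
      fun hxo => not_open_overlap hdis ⟨hxo, hyo⟩
    have habut := abut_1d hxno p.1 hps.1.1 hps.1.2 hpt.1.1 hpt.1.2
    constructor
    · rcases habut with h | h
      · left
        rw [lo_shift (s.i+1) s.k d, ← htk] at h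
        exact lo_inj.1 h
      · right
        rw [lo_shift s.i s.k d, ← htk] at h
        exact lo_inj.1 h
    · refine I_overlap_nest (m := s.k) (d := d) ?_ ?_
      · rw [← htk]; exact hyo.2
      · rw [← htk]; exact hyo.1

/-- Two squares meeting only at one corner are not edge-adjacent. -/
lemma not_nontrivial_of_corner {s t : DyadicSquare}
    (hx : lo (s.i+1) s.k = lo t.i t.k ∨ lo (t.i+1) t.k = lo s.i s.k)
    (hy : lo (s.j+1) s.k = lo t.j t.k ∨ lo (t.j+1) t.k = lo s.j s.k) :
    ¬ (s.region ∩ t.region).Nontrivial := by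
  rw [Set.not_nontrivial_iff]
  have hxpin : ∀ p : ℝ × ℝ, p ∈ s.region ∩ t.region → ∀ q : ℝ × ℝ,
      q ∈ s.region ∩ t.region → p.1 = q.1 := by
    intro p hp q hq
    obtain ⟨hps, hpt⟩ := hp; obtain ⟨hqs, hqt⟩ := hq
    rw [mem_region] at hps hpt hqs hqt
    rcases hx with h | h
    · have h1 : p.1 = lo (s.i+1) s.k := le_antisymm hps.1.2 (h ▸ hpt.1.1)
      have h2 : q.1 = lo (s.i+1) s.k := le_antisymm hqs.1.2 (h ▸ hqt.1.1)
      rw [h1, h2]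
    · have h1 : p.1 = lo s.i s.k := le_antisymm (h ▸ hpt.1.2) hps.1.1
      have h2 : q.1 = lo s.i s.k := le_antisymm (h ▸ hqt.1.2) hqs.1.1
      rw [h1, h2]
  have hypin : ∀ p : ℝ × ℝ, p ∈ s.region ∩ t.region → ∀ q : ℝ × ℝ,
      q ∈ s.region ∩ t.region → p.2 = q.2 := by
    intro p hp q hq
    obtain ⟨hps, hpt⟩ := hp; obtain ⟨hqs, hqt⟩ := hq
    rw [mem_region] at hps hpt hqs hqt
    rcases hy with h | h
    · have h1 : p.2 = lo (s.j+1) s.k := le_antisymm hps.2.2 (h ▸ hpt.2.1)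
      have h2 : q.2 = lo (s.j+1) s.k := le_antisymm hqs.2.2 (h ▸ hqt.2.1)
      rw [h1, h2]
    · have h1 : p.2 = lo s.j s.k := le_antisymm (h ▸ hpt.2.2) hps.2.1
      have h2 : q.2 = lo s.j s.k := le_antisymm (h ▸ hqt.2.2) hqs.2.1
      rw [h1, h2]
  intro p hp q hq
  exact Prod.ext (hxpin p hp q hq) (hypin p hp q hq)

lemma sq_ext {s t : DyadicSquare} (hk : s.k = t.k) (hi : s.i = t.i) (hj : s.j = t.j) :
    s = t := by cases s; cases t; simp_all

lemma edgeAdj_symm {s t : DyadicSquare} (h : s.EdgeAdj t) : t.EdgeAdj s :=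
  ⟨h.1.symm, by rw [Set.inter_comm]; exact h.2⟩

lemma fin4_avoid (a b c : Fin 4) : ∃ x : Fin 4, x ≠ a ∧ x ≠ b ∧ x ≠ c := by
  revert a b c; decide

lemma div_pred {x P : ℕ} (hP : 0 < P) {q : ℕ} (h : (q+1) * P = x + 1) : x / P = q := by
  have e : q*P + P = x+1 := by rw [← h]; ring
  have e2 : (q+1)*P = q*P+P := by ring
  exact Nat.div_eq_of_lt_le (by omega) (by omega)

lemma eq_of_interior_meet {Q : Finset DyadicSquare} (hQ : PairwiseDisjointInteriors Q)
    {s t : DyadicSquare} (hs : s ∈ Q) (ht : t ∈ Q)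
    (h : (interior s.region ∩ interior t.region).Nonempty) : s = t := by
  by_contra hne
  rw [hQ hs ht hne] at h
  exact Set.not_nonempty_empty h

lemma cover {Q : Finset DyadicSquare} (hQ : IsQuadtree Q) {p : ℝ × ℝ}
    (hp : p ∈ Icc (0:ℝ) 1 ×ˢ Icc (0:ℝ) 1) : ∃ s ∈ Q, p ∈ s.region := by
  rw [← hQ.2] at hp
  simpa using hp

lemma region_subset_unit (s : DyadicSquare) : s.region ⊆ Icc (0:ℝ) 1 ×ˢ Icc (0:ℝ) 1 := by
  rw [region_eq]
  have h0 : (0:ℝ) = lo 0 s.k := by simp [lo]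
  have h1 : (1:ℝ) = lo (2^s.k) s.k := by
    unfold lo; push_cast; rw [div_self (ne_of_gt (two_pow_pos' s.k))]
  apply Set.prod_mono <;> rw [h0, h1] <;>
    exact Icc_subset_Icc (lo_le_lo.2 (Nat.zero_le _)) (lo_le_lo.2 (by
      first
      | exact s.hi
      | exact s.hj))

/-- In a quadtree in which every square has level at most `K`, every dyadic square `c`
of level `K` whose parent is the parent of some member of maximal level is itself a member. -/
lemma mem_of_center {Q : Finset DyadicSquare} (hQ : IsQuadtree Q) {K : ℕ}
    (hmax : ∀ t ∈ Q, t.k ≤ K) {s₀ : DyadicSquare} (hs₀ : s₀ ∈ Q) (hk₀ : s₀.k = K)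
    (c : DyadicSquare) (hck : c.k = K) (hci : c.i / 2 = s₀.i / 2) (hcj : c.j / 2 = s₀.j / 2) :
    c ∈ Q := by
  obtain ⟨p, hp⟩ := interior_nonempty c
  obtain ⟨t, htQ, hpt⟩ := cover hQ (region_subset_unit c (interior_subset hp))
  have hmeet : (interior t.region ∩ interior c.region).Nonempty :=
    meet_interior isOpen_interior ⟨p, hpt, hp⟩
  obtain ⟨q, hqt, hqc⟩ := hmeet
  rw [mem_interior_region] at hqt hqc
  have htk : t.k ≤ c.k := hck ▸ hmax t htQ
  have e : t.k + (c.k - t.k) = c.k := by omega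
  have hnesti : c.i / 2 ^ (c.k - t.k) = t.i := by
    refine I_overlap_nest (m := t.k) (d := c.k - t.k) ?_ ?_ <;> rw [e]
    · exact lt_trans hqc.1.1 hqt.1.2
    · exact lt_trans hqt.1.1 hqc.1.2
  have hnestj : c.j / 2 ^ (c.k - t.k) = t.j := by
    refine I_overlap_nest (m := t.k) (d := c.k - t.k) ?_ ?_ <;> rw [e]
    · exact lt_trans hqc.2.1 hqt.2.2
    · exact lt_trans hqt.2.1 hqc.2.2
  by_cases hd0 : c.k - t.k = 0
  · have : c = t := by
      refine sq_ext (by omega) ?_ ?_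
      · rw [← hnesti, hd0, pow_zero, Nat.div_one]
      · rw [← hnestj, hd0, pow_zero, Nat.div_one]
    rwa [this]
  · exfalso
    obtain ⟨d', hd'⟩ : ∃ d', c.k - t.k = d' + 1 := ⟨(c.k - t.k) - 1, by omega⟩
    have hdiv : ∀ v w : ℕ, v / 2 = w / 2 → v / 2 ^ (c.k - t.k) = w / 2 ^ (c.k - t.k) := by
      intro v w hvw
      rw [hd', pow_succ']
      rw [← Nat.div_div_eq_div_mul, ← Nat.div_div_eq_div_mul, hvw]
    have hsub : s₀.region ⊆ t.region := by
      have hks : t.k ≤ s₀.k := by omega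
      have eks : s₀.k - t.k = c.k - t.k := by omega
      refine region_subset_of_nest hks ?_ ?_ <;> rw [eks]
      · rw [hdiv s₀.i c.i (by omega), hnesti]
      · rw [hdiv s₀.j c.j (by omega), hnestj]
    have hmeet2 : (interior s₀.region ∩ interior t.region).Nonempty := by
      obtain ⟨x, hx⟩ := interior_nonempty s₀
      exact ⟨x, hx, interior_mono hsub hx⟩
    have hst : s₀ = t := eq_of_interior_meet hQ.1 hs₀ htQ hmeet2
    have ht0 : t.k = K := by rw [← hst]; exact hk₀
    omega

lemma Icc_lo_split (A m : ℕ) :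
    Icc (lo A m) (lo (A+1) m) =
      Icc (lo (2*A) (m+1)) (lo (2*A+1) (m+1)) ∪ Icc (lo (2*A+1) (m+1)) (lo (2*A+2) (m+1)) := by
  have e1 : lo A m = lo (2*A) (m+1) := by
    have h : A * 2^1 = 2 * A := by ring
    rw [lo_shift A m 1, h]
  have e2 : lo (A+1) m = lo (2*A+2) (m+1) := by
    have h : (A+1) * 2^1 = 2*A+2 := by ring
    rw [lo_shift (A+1) m 1, h]
  rw [e1, e2]
  exact (Set.Icc_union_Icc_eq_Icc (lo_le_lo.2 (by omega)) (lo_le_lo.2 (by omega))).symm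

lemma region_split {m A B : ℕ} (hA : A < 2^m) (hB : B < 2^m)
    (h1 : 2*A < 2^(m+1)) (h2 : 2*A+1 < 2^(m+1)) (h3 : 2*B < 2^(m+1)) (h4 : 2*B+1 < 2^(m+1)) :
    (DyadicSquare.mk m A B hA hB).region =
      ((DyadicSquare.mk (m+1) (2*A) (2*B) h1 h3).region ∪
        (DyadicSquare.mk (m+1) (2*A) (2*B+1) h1 h4).region) ∪
      ((DyadicSquare.mk (m+1) (2*A+1) (2*B) h2 h3).region ∪
        (DyadicSquare.mk (m+1) (2*A+1) (2*B+1) h2 h4).region) := by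
  rw [region_eq, region_eq, region_eq, region_eq, region_eq]
  show Icc (lo A m) (lo (A+1) m) ×ˢ Icc (lo B m) (lo (B+1) m) = _
  rw [Icc_lo_split A m, Icc_lo_split B m, Set.union_prod, Set.prod_union, Set.prod_union]

def Proper (f : DyadicSquare → Fin 4) (Q : Finset DyadicSquare) : Prop :=
  ∀ s ∈ Q, ∀ t ∈ Q, s.EdgeAdj t → f s ≠ f t

lemma eq_of_overlaps {Q : Finset DyadicSquare} (hpd : PairwiseDisjointInteriors Q)
    {t1 t2 : DyadicSquare} (h1 : t1 ∈ Q) (h2 : t2 ∈ Q)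
    (hx1 : lo t1.i t1.k < lo (t2.i+1) t2.k) (hx2 : lo t2.i t2.k < lo (t1.i+1) t1.k)
    (hy1 : lo t1.j t1.k < lo (t2.j+1) t2.k) (hy2 : lo t2.j t2.k < lo (t1.j+1) t1.k) :
    t1 = t2 :=
  eq_of_interior_meet hpd h1 h2 (interiors_meet hx1 hx2 hy1 hy2)

lemma lo_eq_shift {K k' : ℕ} (hk : k' ≤ K) {a I : ℕ} (h : a * 2 ^ (K - k') = I) :
    lo a k' = lo I K := by
  have e : k' + (K - k') = K := by omega
  rw [lo_shift a k' (K - k'), h, e]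

lemma nest_bounds {K k' : ℕ} (hk : k' ≤ K) {J a : ℕ} (h : J / 2 ^ (K - k') = a) :
    lo a k' ≤ lo J K ∧ lo (J+1) K ≤ lo (a+1) k' := by
  have e : k' + (K - k') = K := by omega
  have hsub := I_nest (m := k') (d := K - k') h
  rw [e] at hsub
  exact ⟨(hsub ⟨le_rfl, (lo_succ_lt _ _).le⟩).1, (hsub ⟨(lo_succ_lt _ _).le, le_rfl⟩).2⟩

lemma shrink (Q : Finset DyadicSquare) (hQ : IsQuadtree Q) (h2 : 2 ≤ Q.card) :
    ∃ Q' : Finset DyadicSquare, IsQuadtree Q' ∧ Q'.card + 3 = Q.card ∧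
      ∀ f' : DyadicSquare → Fin 4, Proper f' Q' → ∃ f, Proper f Q := by
  classical
  obtain ⟨s₀, hs₀Q, hmax⟩ := Q.exists_max_image (fun s => s.k) (Finset.card_pos.1 (by omega))
  -- the maximal level is at least 1
  have hK1 : 1 ≤ s₀.k := by
    by_contra hcon
    have hall : ∀ a ∈ Q, ∀ b ∈ Q, a = b := by
      intro a ha b hb
      have h1 := hmax a ha
      have h2 := hmax b hb
      have hai := a.hi; have haj := a.hj; have hbi := b.hi; have hbj := b.hj
      have hak : a.k = 0 := by omega
      have hbk : b.k = 0 := by omega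
      rw [hak, pow_zero] at hai haj
      rw [hbk, pow_zero] at hbi hbj
      exact sq_ext (by omega) (by omega) (by omega)
    have := Finset.card_le_one.2 hall
    omega
  obtain ⟨m, hm⟩ : ∃ m, s₀.k = m + 1 := ⟨s₀.k - 1, by omega⟩
  have hmax' : ∀ t ∈ Q, t.k ≤ m + 1 := fun t ht => hm ▸ hmax t ht
  obtain ⟨A, hA2⟩ : ∃ A, s₀.i / 2 = A := ⟨_, rfl⟩
  obtain ⟨B, hB2⟩ : ∃ B, s₀.j / 2 = B := ⟨_, rfl⟩
  have hpow : (2:ℕ)^(m+1) = 2^m * 2 := pow_succ 2 m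
  have hA : A < 2^m := by have := s₀.hi; rw [hm] at this; omega
  have hB : B < 2^m := by have := s₀.hj; rw [hm] at this; omega
  have hbi0 : 2*A < 2^(m+1) := by omega
  have hbi1 : 2*A+1 < 2^(m+1) := by omega
  have hbj0 : 2*B < 2^(m+1) := by omega
  have hbj1 : 2*B+1 < 2^(m+1) := by omega
  set parent : DyadicSquare := ⟨m, A, B, hA, hB⟩ with hpardef
  set c00 : DyadicSquare := ⟨m+1, 2*A, 2*B, hbi0, hbj0⟩ with hc00def
  set c01 : DyadicSquare := ⟨m+1, 2*A, 2*B+1, hbi0, hbj1⟩ with hc01def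
  set c10 : DyadicSquare := ⟨m+1, 2*A+1, 2*B, hbi1, hbj0⟩ with hc10def
  set c11 : DyadicSquare := ⟨m+1, 2*A+1, 2*B+1, hbi1, hbj1⟩ with hc11def
  -- children are members
  have hc00Q : c00 ∈ Q := mem_of_center hQ hmax' hs₀Q hm c00 rfl (by show 2*A/2 = s₀.i/2; omega) (by show 2*B/2 = s₀.j/2; omega)
  have hc01Q : c01 ∈ Q := mem_of_center hQ hmax' hs₀Q hm c01 rfl (by show 2*A/2 = s₀.i/2; omega) (by show (2*B+1)/2 = s₀.j/2; omega)
  have hc10Q : c10 ∈ Q := mem_of_center hQ hmax' hs₀Q hm c10 rfl (by show (2*A+1)/2 = s₀.i/2; omega) (by show 2*B/2 = s₀.j/2; omega)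
  have hc11Q : c11 ∈ Q := mem_of_center hQ hmax' hs₀Q hm c11 rfl (by show (2*A+1)/2 = s₀.i/2; omega) (by show (2*B+1)/2 = s₀.j/2; omega)
  -- distinctness
  have hne0001 : c00 ≠ c01 := by
    intro h; rw [hc00def, hc01def] at h; simp only [DyadicSquare.mk.injEq] at h; omega
  have hne0010 : c00 ≠ c10 := by
    intro h; rw [hc00def, hc10def] at h; simp only [DyadicSquare.mk.injEq] at h; omega
  have hne0011 : c00 ≠ c11 := by
    intro h; rw [hc00def, hc11def] at h; simp only [DyadicSquare.mk.injEq] at h; omega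
  have hne0110 : c01 ≠ c10 := by
    intro h; rw [hc01def, hc10def] at h; simp only [DyadicSquare.mk.injEq] at h; omega
  have hne0111 : c01 ≠ c11 := by
    intro h; rw [hc01def, hc11def] at h; simp only [DyadicSquare.mk.injEq] at h; omega
  have hne1011 : c10 ≠ c11 := by
    intro h; rw [hc10def, hc11def] at h; simp only [DyadicSquare.mk.injEq] at h; omega
  set C : Finset DyadicSquare := insert c00 (insert c01 (insert c10 {c11})) with hCdef
  have hmemC : ∀ u : DyadicSquare, u ∈ C ↔ u = c00 ∨ u = c01 ∨ u = c10 ∨ u = c11 := by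
    intro u; rw [hCdef]; simp [Finset.mem_insert, Finset.mem_singleton]
  have hC00 : c00 ∈ C := (hmemC c00).2 (Or.inl rfl)
  have hC01 : c01 ∈ C := (hmemC c01).2 (Or.inr (Or.inl rfl))
  have hC10 : c10 ∈ C := (hmemC c10).2 (Or.inr (Or.inr (Or.inl rfl)))
  have hC11 : c11 ∈ C := (hmemC c11).2 (Or.inr (Or.inr (Or.inr rfl)))
  have hCQ : C ⊆ Q := by
    intro u hu
    rcases (hmemC u).1 hu with rfl | rfl | rfl | rfl
    exacts [hc00Q, hc01Q, hc10Q, hc11Q]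
  have hCcard : C.card = 4 := by
    rw [hCdef]
    rw [Finset.card_insert_of_notMem (by
      simp only [Finset.mem_insert, Finset.mem_singleton]
      push_neg; exact ⟨hne0001, hne0010, hne0011⟩)]
    rw [Finset.card_insert_of_notMem (by
      simp only [Finset.mem_insert, Finset.mem_singleton]
      push_neg; exact ⟨hne0110, hne0111⟩)]
    rw [Finset.card_insert_of_notMem (by
      simp only [Finset.mem_singleton]; exact hne1011)]
    rw [Finset.card_singleton]
  -- the split of the parent's region
  have hsplit : parent.region = (c00.region ∪ c01.region) ∪ (c10.region ∪ c11.region) := by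
    rw [hpardef, hc00def, hc01def, hc10def, hc11def]
    exact region_split hA hB hbi0 hbi1 hbj0 hbj1
  have hsub00 : c00.region ⊆ parent.region := by
    rw [hsplit]; exact Set.subset_union_left.trans Set.subset_union_left
  have hsub01 : c01.region ⊆ parent.region := by
    rw [hsplit]; exact Set.subset_union_right.trans Set.subset_union_left
  have hsub10 : c10.region ⊆ parent.region := by
    rw [hsplit]; exact Set.subset_union_left.trans Set.subset_union_right
  have hsub11 : c11.region ⊆ parent.region := by
    rw [hsplit]; exact Set.subset_union_right.trans Set.subset_union_right
  -- parent is not in Q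
  have hparnotQ : parent ∉ Q := by
    intro hpQ
    have hmeet : (interior c00.region ∩ interior parent.region).Nonempty := by
      obtain ⟨p, hp⟩ := interior_nonempty c00
      exact ⟨p, hp, interior_mono hsub00 hp⟩
    have h := eq_of_interior_meet hQ.1 hc00Q hpQ hmeet
    rw [hc00def, hpardef] at h
    simp only [DyadicSquare.mk.injEq] at h
    omega
  set Q' : Finset DyadicSquare := insert parent (Q \ C) with hQ'def
  have hparQ' : parent ∈ Q' := Finset.mem_insert_self _ _
  have holdQ' : ∀ t ∈ Q, t ∉ C → t ∈ Q' :=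
    fun t ht htC => Finset.mem_insert_of_mem (Finset.mem_sdiff.2 ⟨ht, htC⟩)
  -- interior of parent is disjoint from interiors of old squares
  have hkill : ∀ y ∈ Q \ C, interior parent.region ∩ interior y.region = ∅ := by
    intro y hy
    by_contra hne
    obtain ⟨p, hp1, hp2⟩ := Set.nonempty_iff_ne_empty.2 hne
    have hyQ := (Finset.mem_sdiff.1 hy).1
    have hyC := (Finset.mem_sdiff.1 hy).2
    have hgen : ∀ ch : DyadicSquare, ch ∈ Q → ch ∈ C → p ∈ ch.region → False := by
      intro ch hchQ hchC hpch
      have hmeet : (interior ch.region ∩ interior y.region).Nonempty :=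
        meet_interior isOpen_interior ⟨p, hpch, hp2⟩
      have h := eq_of_interior_meet hQ.1 hchQ hyQ hmeet
      exact hyC (h ▸ hchC)
    have hpreg : p ∈ parent.region := interior_subset hp1
    rw [hsplit] at hpreg
    rcases hpreg with (h | h) | (h | h)
    · exact hgen c00 hc00Q hC00 h
    · exact hgen c01 hc01Q hC01 h
    · exact hgen c10 hc10Q hC10 h
    · exact hgen c11 hc11Q hC11 h
  have hQ'quad : IsQuadtree Q' := by
    constructor
    · intro x hx y hy hxy
      rcases Finset.mem_insert.1 (Finset.mem_coe.1 hx) with rfl | hx'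
      · rcases Finset.mem_insert.1 (Finset.mem_coe.1 hy) with rfl | hy'
        · exact absurd rfl hxy
        · exact hkill y hy'
      · rcases Finset.mem_insert.1 (Finset.mem_coe.1 hy) with rfl | hy'
        · rw [Set.inter_comm]; exact hkill x hx'
        · exact hQ.1 (Finset.mem_sdiff.1 hx').1 (Finset.mem_sdiff.1 hy').1 hxy
    · have hsplitC : ⋃ s ∈ C, DyadicSquare.region s = parent.region := by
        rw [hCdef, Finset.set_biUnion_insert, Finset.set_biUnion_insert,
          Finset.set_biUnion_insert, Finset.set_biUnion_singleton, hsplit]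
        rw [Set.union_assoc]
      calc ⋃ s ∈ Q', DyadicSquare.region s
          = parent.region ∪ ⋃ s ∈ Q \ C, DyadicSquare.region s := by
            rw [hQ'def, Finset.set_biUnion_insert]
        _ = (⋃ s ∈ C, DyadicSquare.region s) ∪ ⋃ s ∈ Q \ C, DyadicSquare.region s := by
            rw [hsplitC]
        _ = ⋃ s ∈ C ∪ (Q \ C), DyadicSquare.region s := (Finset.set_biUnion_union _ _ _).symm
        _ = ⋃ s ∈ Q, DyadicSquare.region s := by rw [Finset.union_sdiff_of_subset hCQ]
        _ = Set.Icc (0 : ℝ) 1 ×ˢ Set.Icc (0 : ℝ) 1 := hQ.2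
  have hQ4 : 4 ≤ Q.card := hCcard ▸ Finset.card_le_card hCQ
  have hQ'card : Q'.card + 3 = Q.card := by
    rw [hQ'def, Finset.card_insert_of_notMem (by
      intro h; exact hparnotQ (Finset.mem_sdiff.1 h).1)]
    rw [Finset.card_sdiff_of_subset hCQ, hCcard]
    omega
  refine ⟨Q', hQ'quad, hQ'card, ?_⟩
  intro f' hf'
  -- side analysis for c01 (top-left child): neighbours are left- or top-abutting
  have hkillch : ∀ t ∈ Q, t ∉ C → ∀ ch : DyadicSquare, ch ∈ C → ch ∈ Q →
      t.k ≤ ch.k → ch.i / 2 ^ (ch.k - t.k) = t.i → ch.j / 2 ^ (ch.k - t.k) = t.j → False := by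
    intro t ht htC ch hchC hchQ hk hi hj
    have hsub := region_subset_of_nest hk hi hj
    have hmeet : (interior ch.region ∩ interior t.region).Nonempty := by
      obtain ⟨p, hp⟩ := interior_nonempty ch
      exact ⟨p, hp, interior_mono hsub hp⟩
    have h := eq_of_interior_meet hQ.1 hchQ ht hmeet
    exact htC (h ▸ hchC)
  have hside01 : ∀ t ∈ Q, t ∉ C → t.EdgeAdj c01 →
      (((t.i+1) * 2^(m+1 - t.k) = 2*A ∧ (2*B+1) / 2^(m+1 - t.k) = t.j) ∨
       ((2*B+1) + 1 = t.j * 2^(m+1 - t.k) ∧ (2*A) / 2^(m+1 - t.k) = t.i)) := by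
    intro t ht htC hadj
    have hne : t ≠ c01 := fun h => htC (h ▸ hC01)
    have hdis := hQ.1 ht hc01Q hne
    have hkt : t.k ≤ c01.k := hmax' t ht
    have hP : 0 < 2^(m+1-t.k) := Nat.pow_pos (by norm_num)
    have hchar := adj_char hkt hdis hadj.2
    have hkt' : t.k ≤ m+1 := hmax' t ht
    rcases hchar with ⟨hab, hnest⟩ | ⟨hab, hnest⟩
    · rcases hab with h | h
      · exact Or.inl ⟨h, hnest⟩
      · -- t is to the right of c01 : kills via c11
        exfalso
        refine hkillch t ht htC c11 hC11 hc11Q hkt' ?_ ?_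
        · show (2*A+1) / 2^(m+1 - t.k) = t.i
          rw [show 2*A+1 = t.i * 2^(m+1-t.k) from h]
          exact Nat.mul_div_cancel _ hP
        · exact hnest
    · rcases hab with h | h
      · -- t is below c01 : kills via c00
        exfalso
        refine hkillch t ht htC c00 hC00 hc00Q hkt' ?_ ?_
        · exact hnest
        · show (2*B) / 2^(m+1 - t.k) = t.j
          exact div_pred hP h
      · exact Or.inr ⟨h, hnest⟩
  have hside10 : ∀ t ∈ Q, t ∉ C → t.EdgeAdj c10 →
      (((2*A+1) + 1 = t.i * 2^(m+1 - t.k) ∧ (2*B) / 2^(m+1 - t.k) = t.j) ∨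
       ((t.j+1) * 2^(m+1 - t.k) = 2*B ∧ (2*A+1) / 2^(m+1 - t.k) = t.i)) := by
    intro t ht htC hadj
    have hne : t ≠ c10 := fun h => htC (h ▸ hC10)
    have hdis := hQ.1 ht hc10Q hne
    have hkt : t.k ≤ c10.k := hmax' t ht
    have hP : 0 < 2^(m+1-t.k) := Nat.pow_pos (by norm_num)
    have hchar := adj_char hkt hdis hadj.2
    have hkt' : t.k ≤ m+1 := hmax' t ht
    rcases hchar with ⟨hab, hnest⟩ | ⟨hab, hnest⟩
    · rcases hab with h | h
      · -- t is to the left of c10 : kills via c00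
        exfalso
        refine hkillch t ht htC c00 hC00 hc00Q hkt' ?_ ?_
        · show (2*A) / 2^(m+1 - t.k) = t.i
          exact div_pred hP h
        · exact hnest
      · exact Or.inl ⟨h, hnest⟩
    · rcases hab with h | h
      · exact Or.inr ⟨h, hnest⟩
      · -- t is above c10 : kills via c11
        exfalso
        refine hkillch t ht htC c11 hC11 hc11Q hkt' ?_ ?_
        · exact hnest
        · show (2*B+1) / 2^(m+1 - t.k) = t.j
          rw [show 2*B+1 = t.j * 2^(m+1-t.k) from h]
          exact Nat.mul_div_cancel _ hP
  -- uniqueness of abutting neighbours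
  have huniqL : ∀ t1 ∈ Q, ∀ t2 ∈ Q,
      ((t1.i+1) * 2^(m+1 - t1.k) = 2*A ∧ (2*B+1) / 2^(m+1 - t1.k) = t1.j) →
      ((t2.i+1) * 2^(m+1 - t2.k) = 2*A ∧ (2*B+1) / 2^(m+1 - t2.k) = t2.j) → t1 = t2 := by
    rintro t1 h1 t2 h2 ⟨ha1, hn1⟩ ⟨ha2, hn2⟩
    have hk1 : t1.k ≤ m+1 := hmax' t1 h1
    have hk2 : t2.k ≤ m+1 := hmax' t2 h2
    have e1 := lo_eq_shift hk1 ha1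
    have e2 := lo_eq_shift hk2 ha2
    have b1 := nest_bounds hk1 hn1
    have b2 := nest_bounds hk2 hn2
    refine eq_of_overlaps hQ.1 h1 h2 ?_ ?_ ?_ ?_
    · rw [e2, ← e1]; exact lo_succ_lt _ _
    · rw [e1, ← e2]; exact lo_succ_lt _ _
    · exact lt_of_le_of_lt b1.1 (lt_of_lt_of_le (lo_succ_lt _ _) b2.2)
    · exact lt_of_le_of_lt b2.1 (lt_of_lt_of_le (lo_succ_lt _ _) b1.2)
  have huniqT : ∀ t1 ∈ Q, ∀ t2 ∈ Q,
      ((2*B+1) + 1 = t1.j * 2^(m+1 - t1.k) ∧ (2*A) / 2^(m+1 - t1.k) = t1.i) →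
      ((2*B+1) + 1 = t2.j * 2^(m+1 - t2.k) ∧ (2*A) / 2^(m+1 - t2.k) = t2.i) → t1 = t2 := by
    rintro t1 h1 t2 h2 ⟨ha1, hn1⟩ ⟨ha2, hn2⟩
    have hk1 : t1.k ≤ m+1 := hmax' t1 h1
    have hk2 : t2.k ≤ m+1 := hmax' t2 h2
    have e1 := lo_eq_shift hk1 ha1.symm
    have e2 := lo_eq_shift hk2 ha2.symm
    have b1 := nest_bounds hk1 hn1
    have b2 := nest_bounds hk2 hn2
    refine eq_of_overlaps hQ.1 h1 h2 ?_ ?_ ?_ ?_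
    · exact lt_of_le_of_lt b1.1 (lt_of_lt_of_le (lo_succ_lt _ _) b2.2)
    · exact lt_of_le_of_lt b2.1 (lt_of_lt_of_le (lo_succ_lt _ _) b1.2)
    · rw [e1, ← e2]; exact lo_succ_lt _ _
    · rw [e2, ← e1]; exact lo_succ_lt _ _
  have huniqR : ∀ t1 ∈ Q, ∀ t2 ∈ Q,
      ((2*A+1) + 1 = t1.i * 2^(m+1 - t1.k) ∧ (2*B) / 2^(m+1 - t1.k) = t1.j) →
      ((2*A+1) + 1 = t2.i * 2^(m+1 - t2.k) ∧ (2*B) / 2^(m+1 - t2.k) = t2.j) → t1 = t2 := by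
    rintro t1 h1 t2 h2 ⟨ha1, hn1⟩ ⟨ha2, hn2⟩
    have hk1 : t1.k ≤ m+1 := hmax' t1 h1
    have hk2 : t2.k ≤ m+1 := hmax' t2 h2
    have e1 := lo_eq_shift hk1 ha1.symm
    have e2 := lo_eq_shift hk2 ha2.symm
    have b1 := nest_bounds hk1 hn1
    have b2 := nest_bounds hk2 hn2
    refine eq_of_overlaps hQ.1 h1 h2 ?_ ?_ ?_ ?_
    · rw [e1, ← e2]; exact lo_succ_lt _ _
    · rw [e2, ← e1]; exact lo_succ_lt _ _
    · exact lt_of_le_of_lt b1.1 (lt_of_lt_of_le (lo_succ_lt _ _) b2.2)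
    · exact lt_of_le_of_lt b2.1 (lt_of_lt_of_le (lo_succ_lt _ _) b1.2)
  have huniqB : ∀ t1 ∈ Q, ∀ t2 ∈ Q,
      ((t1.j+1) * 2^(m+1 - t1.k) = 2*B ∧ (2*A+1) / 2^(m+1 - t1.k) = t1.i) →
      ((t2.j+1) * 2^(m+1 - t2.k) = 2*B ∧ (2*A+1) / 2^(m+1 - t2.k) = t2.i) → t1 = t2 := by
    rintro t1 h1 t2 h2 ⟨ha1, hn1⟩ ⟨ha2, hn2⟩
    have hk1 : t1.k ≤ m+1 := hmax' t1 h1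
    have hk2 : t2.k ≤ m+1 := hmax' t2 h2
    have e1 := lo_eq_shift hk1 ha1
    have e2 := lo_eq_shift hk2 ha2
    have b1 := nest_bounds hk1 hn1
    have b2 := nest_bounds hk2 hn2
    refine eq_of_overlaps hQ.1 h1 h2 ?_ ?_ ?_ ?_
    · exact lt_of_le_of_lt b1.1 (lt_of_lt_of_le (lo_succ_lt _ _) b2.2)
    · exact lt_of_le_of_lt b2.1 (lt_of_lt_of_le (lo_succ_lt _ _) b1.2)
    · rw [e2, ← e1]; exact lo_succ_lt _ _
    · rw [e1, ← e2]; exact lo_succ_lt _ _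
  -- each of c01, c10 sees at most two colours among old neighbours
  have hkey01 : ∃ a b : Fin 4, ∀ t ∈ Q, t ∉ C → t.EdgeAdj c01 → (f' t = a ∨ f' t = b) := by
    by_cases hL : ∃ t, t ∈ Q ∧ ((t.i+1) * 2^(m+1 - t.k) = 2*A ∧ (2*B+1) / 2^(m+1 - t.k) = t.j)
    · obtain ⟨tL, htL, hLt⟩ := hL
      by_cases hT : ∃ t, t ∈ Q ∧ ((2*B+1) + 1 = t.j * 2^(m+1 - t.k) ∧ (2*A) / 2^(m+1 - t.k) = t.i)
      · obtain ⟨tT, htT, hTt⟩ := hT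
        refine ⟨f' tL, f' tT, fun t ht htC hadj => ?_⟩
        rcases hside01 t ht htC hadj with h | h
        · exact Or.inl (congrArg f' (huniqL t ht tL htL h hLt))
        · exact Or.inr (congrArg f' (huniqT t ht tT htT h hTt))
      · refine ⟨f' tL, f' tL, fun t ht htC hadj => ?_⟩
        rcases hside01 t ht htC hadj with h | h
        · exact Or.inl (congrArg f' (huniqL t ht tL htL h hLt))
        · exact absurd ⟨t, ht, h⟩ hT
    · by_cases hT : ∃ t, t ∈ Q ∧ ((2*B+1) + 1 = t.j * 2^(m+1 - t.k) ∧ (2*A) / 2^(m+1 - t.k) = t.i)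
      · obtain ⟨tT, htT, hTt⟩ := hT
        refine ⟨f' tT, f' tT, fun t ht htC hadj => ?_⟩
        rcases hside01 t ht htC hadj with h | h
        · exact absurd ⟨t, ht, h⟩ hL
        · exact Or.inl (congrArg f' (huniqT t ht tT htT h hTt))
      · refine ⟨0, 0, fun t ht htC hadj => ?_⟩
        rcases hside01 t ht htC hadj with h | h
        · exact absurd ⟨t, ht, h⟩ hL
        · exact absurd ⟨t, ht, h⟩ hT
  have hkey10 : ∃ a b : Fin 4, ∀ t ∈ Q, t ∉ C → t.EdgeAdj c10 → (f' t = a ∨ f' t = b) := by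
    by_cases hR : ∃ t, t ∈ Q ∧ ((2*A+1) + 1 = t.i * 2^(m+1 - t.k) ∧ (2*B) / 2^(m+1 - t.k) = t.j)
    · obtain ⟨tR, htR, hRt⟩ := hR
      by_cases hDn : ∃ t, t ∈ Q ∧ ((t.j+1) * 2^(m+1 - t.k) = 2*B ∧ (2*A+1) / 2^(m+1 - t.k) = t.i)
      · obtain ⟨tD, htD, hDt⟩ := hDn
        refine ⟨f' tR, f' tD, fun t ht htC hadj => ?_⟩
        rcases hside10 t ht htC hadj with h | h
        · exact Or.inl (congrArg f' (huniqR t ht tR htR h hRt))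
        · exact Or.inr (congrArg f' (huniqB t ht tD htD h hDt))
      · refine ⟨f' tR, f' tR, fun t ht htC hadj => ?_⟩
        rcases hside10 t ht htC hadj with h | h
        · exact Or.inl (congrArg f' (huniqR t ht tR htR h hRt))
        · exact absurd ⟨t, ht, h⟩ hDn
    · by_cases hDn : ∃ t, t ∈ Q ∧ ((t.j+1) * 2^(m+1 - t.k) = 2*B ∧ (2*A+1) / 2^(m+1 - t.k) = t.i)
      · obtain ⟨tD, htD, hDt⟩ := hDn
        refine ⟨f' tD, f' tD, fun t ht htC hadj => ?_⟩
        rcases hside10 t ht htC hadj with h | h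
        · exact absurd ⟨t, ht, h⟩ hR
        · exact Or.inl (congrArg f' (huniqB t ht tD htD h hDt))
      · refine ⟨0, 0, fun t ht htC hadj => ?_⟩
        rcases hside10 t ht htC hadj with h | h
        · exact absurd ⟨t, ht, h⟩ hR
        · exact absurd ⟨t, ht, h⟩ hDn
  obtain ⟨a01, b01, hk01⟩ := hkey01
  obtain ⟨a10, b10, hk10⟩ := hkey10
  obtain ⟨c1, hc1a, hc1b, hc1c⟩ := fin4_avoid (f' parent) a01 b01
  obtain ⟨c2, hc2a, hc2b, hc2c⟩ := fin4_avoid (f' parent) a10 b10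
  have hforb1 : ∀ t ∈ Q, t ∉ C → t.EdgeAdj c01 → f' t ≠ c1 := by
    intro t ht htC hadj
    rcases hk01 t ht htC hadj with h | h
    · rw [h]; exact fun hh => hc1b hh.symm
    · rw [h]; exact fun hh => hc1c hh.symm
  have hforb2 : ∀ t ∈ Q, t ∉ C → t.EdgeAdj c10 → f' t ≠ c2 := by
    intro t ht htC hadj
    rcases hk10 t ht htC hadj with h | h
    · rw [h]; exact fun hh => hc2b hh.symm
    · rw [h]; exact fun hh => hc2c hh.symm
  -- old neighbours of c00 / c11 avoid the parent's colour
  have hadjpar : ∀ ch : DyadicSquare, ch.region ⊆ parent.region →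
      ∀ t ∈ Q, t ∉ C → t.EdgeAdj ch → f' t ≠ f' parent := by
    intro ch hchsub t ht htC hadj
    have htp : t ≠ parent := fun h => hparnotQ (h ▸ ht)
    have hadjP : t.EdgeAdj parent :=
      ⟨htp, hadj.2.mono (Set.inter_subset_inter (subset_refl _) hchsub)⟩
    exact hf' t (holdQ' t ht htC) parent hparQ' hadjP
  -- the two diagonal pairs are not edge-adjacent
  have hdiag1 : ¬ (c00.region ∩ c11.region).Nontrivial := by
    refine not_nontrivial_of_corner (Or.inl ?_) (Or.inl ?_) <;> rfl
  have hdiag2 : ¬ (c01.region ∩ c10.region).Nontrivial := by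
    refine not_nontrivial_of_corner (Or.inl ?_) (Or.inr ?_) <;> rfl
  -- the new colouring
  set g : DyadicSquare → Fin 4 := fun u =>
    if u = c00 then f' parent else if u = c11 then f' parent
    else if u = c01 then c1 else if u = c10 then c2 else f' u with hgdef
  have hg00 : g c00 = f' parent := by simp [hgdef]
  have hg11 : g c11 = f' parent := by simp [hgdef, Ne.symm hne0011]
  have hg01 : g c01 = c1 := by simp [hgdef, Ne.symm hne0001, hne0111]
  have hg10 : g c10 = c2 := by simp [hgdef, Ne.symm hne0010, hne1011, Ne.symm hne0110]
  have hgold : ∀ u, u ∉ C → g u = f' u := by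
    intro u hu
    have h1 : u ≠ c00 := fun h => hu (h ▸ hC00)
    have h2 : u ≠ c11 := fun h => hu (h ▸ hC11)
    have h3 : u ≠ c01 := fun h => hu (h ▸ hC01)
    have h4 : u ≠ c10 := fun h => hu (h ▸ hC10)
    simp [hgdef, h1, h2, h3, h4]
  refine ⟨g, ?_⟩
  intro s hs t ht hadj
  by_cases hsC : s ∈ C <;> by_cases htC : t ∈ C
  · -- both new
    rcases (hmemC s).1 hsC with rfl | rfl | rfl | rfl <;>
      rcases (hmemC t).1 htC with rfl | rfl | rfl | rfl
    · exact absurd rfl hadj.1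
    · rw [hg00, hg01]; exact fun h => hc1a h.symm
    · rw [hg00, hg10]; exact fun h => hc2a h.symm
    · exact absurd hadj.2 hdiag1
    · rw [hg01, hg00]; exact hc1a
    · exact absurd rfl hadj.1
    · exact absurd hadj.2 hdiag2
    · rw [hg01, hg11]; exact hc1a
    · rw [hg10, hg00]; exact hc2a
    · have h2' := hadj.2; rw [Set.inter_comm] at h2'; exact absurd h2' hdiag2
    · exact absurd rfl hadj.1
    · rw [hg10, hg11]; exact hc2a
    · have h2' := hadj.2; rw [Set.inter_comm] at h2'; exact absurd h2' hdiag1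
    · rw [hg11, hg01]; exact fun h => hc1a h.symm
    · rw [hg11, hg10]; exact fun h => hc2a h.symm
    · exact absurd rfl hadj.1
  · -- s new, t old
    have hgt := hgold t htC
    rcases (hmemC s).1 hsC with rfl | rfl | rfl | rfl
    · rw [hg00, hgt]; exact (hadjpar c00 hsub00 t ht htC (edgeAdj_symm hadj)).symm
    · rw [hg01, hgt]; exact fun h => hforb1 t ht htC (edgeAdj_symm hadj) h.symm
    · rw [hg10, hgt]; exact fun h => hforb2 t ht htC (edgeAdj_symm hadj) h.symm
    · rw [hg11, hgt]; exact (hadjpar c11 hsub11 t ht htC (edgeAdj_symm hadj)).symm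
  · -- s old, t new
    have hgs := hgold s hsC
    rcases (hmemC t).1 htC with rfl | rfl | rfl | rfl
    · rw [hgs, hg00]; exact hadjpar c00 hsub00 s hs hsC hadj
    · rw [hgs, hg01]; exact hforb1 s hs hsC hadj
    · rw [hgs, hg10]; exact hforb2 s hs hsC hadj
    · rw [hgs, hg11]; exact hadjpar c11 hsub11 s hs hsC hadj
  · -- both old
    rw [hgold s hsC, hgold t htC]
    exact hf' s (holdQ' s hs hsC) t (holdQ' t ht htC) hadj

end QT4

/-- Every quadtree can be properly 4-colored under edge adjacency. -/
theorem quadtree_four_colorable (Q : Finset DyadicSquare) (hQ : IsQuadtree Q) :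
    ∃ f : DyadicSquare → Fin 4,
      ∀ s ∈ Q, ∀ t ∈ Q, DyadicSquare.EdgeAdj s t → f s ≠ f t := by
  suffices h : ∀ (n : ℕ) (Q : Finset DyadicSquare), Q.card ≤ n → IsQuadtree Q →
      ∃ f : DyadicSquare → Fin 4, QT4.Proper f Q by
    obtain ⟨f, hf⟩ := h Q.card Q le_rfl hQ
    exact ⟨f, hf⟩
  intro n
  induction n with
  | zero =>
    intro Q hc _
    refine ⟨fun _ => 0, ?_⟩
    intro s hs
    exfalso
    have hQe : Q = ∅ := Finset.card_eq_zero.1 (by omega)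
    rw [hQe] at hs
    exact Finset.notMem_empty s hs
  | succ n ih =>
    intro Q hc hQ
    by_cases hsmall : Q.card ≤ 1
    · exact ⟨fun _ => 0, fun s hs t ht hadj =>
        absurd (Finset.card_le_one.1 hsmall s hs t ht) hadj.1⟩
    · obtain ⟨Q', hQ'q, hcard, hstep⟩ := QT4.shrink Q hQ (by omega)
      obtain ⟨f', hf'⟩ := ih Q' (by omega) hQ'q
      exact hstep f' hf'
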